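/- Let λ₁,...,λₙ > 0 and let a ≠ 0, d, b₁, c₁, ..., bₙ, cₙ be real numbers. Define γ : ℝ → Osc_n(λ₁,...,λₙ) by γ(s) = (z(s), (x₁(s), y₁(s), ..., xₙ(s), yₙ(s)), as), where z(s) = (d + (1/(2a)) Σ_k (b_k²+c_k²)/λ_k) s − (1/(2a²)) Σ_k ((b_k²+c_k²)/λ_k²) sin(λ_k a s), x_j(s) = (1/(aλ_j))(b_j sin(λ_j a s) + c_j cos(λ_j a s) − c_j), y_j(s) = (1/(aλ_j))(−b_j cos(λ_j a s) + c_j sin(λ_j a s) + b_j). Then γ is a one-parameter subgroup of Osc_n(λ₁,...,λₙ): γ(s₁ + s₂) = γ(s₁)·γ(s₂) for all s₁, s₂ ∈ ℝ (in particular γ(0) is the identity), and its derivative at s = 0 equals (d, (b₁, c₁, ..., bₙ, cₙ), a). -/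

import Mathlib

open Real

noncomputable section

/-- rotation by angle `θ` acting on `ℝ × ℝ` -/
def rot (θ : ℝ) (p : ℝ × ℝ) : ℝ × ℝ :=
  (Real.cos θ * p.1 - Real.sin θ * p.2, Real.sin θ * p.1 + Real.cos θ * p.2)

/-- the matrix `[[0,1],[-1,0]]` acting on `ℝ × ℝ` -/
def Jpair (p : ℝ × ℝ) : ℝ × ℝ := (p.2, -p.1)

/-- euclidean inner product on `ℝ × ℝ` -/
def dot2 (p q : ℝ × ℝ) : ℝ := p.1 * q.1 + p.2 * q.2

/-- underlying set `ℝ × ℝ^{2n} × ℝ` of the oscillator group, where the middle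
factor `ℝ^{2n}` is recorded as `n` pairs `(x_i, y_i)`. -/
abbrev OscG (n : ℕ) := ℝ × (Fin n → ℝ × ℝ) × ℝ

/-- multiplication of the oscillator group `Osc_n(λ₁,…,λₙ)`:
`(z₁,v₁,t₁)·(z₂,v₂,t₂) = (z₁+z₂+½ v₁ᵀ J R(t₁) v₂, v₁ + R(t₁)v₂, t₁+t₂)`,
where `R(t)` rotates the `i`-th pair by the angle `λ_i t`. -/
def oscMul {n : ℕ} (lam : Fin n → ℝ) (g h : OscG n) : OscG n :=
  (g.1 + h.1 + (1/2) * ∑ i, dot2 (g.2.1 i) (Jpair (rot (lam i * g.2.2) (h.2.1 i))),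
   fun i => g.2.1 i + rot (lam i * g.2.2) (h.2.1 i),
   g.2.2 + h.2.2)

/-- identity element of the oscillator group -/
def oscOne (n : ℕ) : OscG n := (0, fun _ => (0, 0), 0)

/-- inverse in the oscillator group: `(z,v,t)⁻¹ = (-z, -R(-t)v, -t)` -/
def oscInv {n : ℕ} (lam : Fin n → ℝ) (g : OscG n) : OscG n :=
  (-g.1, fun i => -(rot (lam i * (-g.2.2)) (g.2.1 i)), -g.2.2)

/-- `Γ` is a lattice of the oscillator group: a discrete subgroup with compact
quotient (the quotient by the right multiplication action of `Γ`). -/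
structure IsLattice {n : ℕ} (lam : Fin n → ℝ) (Γ : Set (OscG n)) : Prop where
  one_mem : oscOne n ∈ Γ
  mul_mem : ∀ g ∈ Γ, ∀ h ∈ Γ, oscMul lam g h ∈ Γ
  inv_mem : ∀ g ∈ Γ, oscInv lam g ∈ Γ
  discrete : DiscreteTopology Γ
  cocompact : CompactSpace (Quot (fun g h : OscG n => ∃ γ ∈ Γ, h = oscMul lam g γ))

/-- `Q(X) = 2ad + Σ_k (b_k² + c_k²)/λ_k` for `X = (d,(b₁,c₁,…,bₙ,cₙ),a)` -/
def Qform {n : ℕ} (lam : Fin n → ℝ) (d a : ℝ) (b c : Fin n → ℝ) : ℝ :=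
  2 * a * d + ∑ k, (b k ^ 2 + c k ^ 2) / lam k

/-- the geodesic through the identity with initial velocity
`X = (d,(b₁,c₁,…,bₙ,cₙ),a)` for the bi-invariant Lorentzian metric on the
oscillator group. -/
def geo {n : ℕ} (lam : Fin n → ℝ) (d : ℝ) (b c : Fin n → ℝ) (a : ℝ) (s : ℝ) : OscG n :=
  if a = 0 then (d * s, fun j => (b j * s, c j * s), 0)
  else
    ((d + (1/(2*a)) * ∑ k, (b k ^ 2 + c k ^ 2) / lam k) * s
        - (1/(2*a^2)) * ∑ k, ((b k ^ 2 + c k ^ 2) / (lam k)^2) * Real.sin (lam k * a * s),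
     fun j => ((1/(a * lam j)) * (b j * Real.sin (lam j * a * s)
                  + c j * Real.cos (lam j * a * s) - c j),
               (1/(a * lam j)) * (-(b j) * Real.cos (lam j * a * s)
                  + c j * Real.sin (lam j * a * s) + b j)),
     a * s)

/-- For `a ≠ 0`, the geodesic `γ` through the identity with initial velocity
`(d,(b₁,c₁,…,bₙ,cₙ),a)` is a one-parameter subgroup of `Osc_n(λ₁,…,λₙ)`:
`γ(s₁+s₂) = γ(s₁)·γ(s₂)` (in particular `γ(0)` is the identity), and its
derivative at `s = 0` is `(d,(b₁,c₁,…,bₙ,cₙ),a)`. -/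
theorem stmt_9 {n : ℕ} (lam : Fin n → ℝ) (hlam : ∀ i, 0 < lam i)
    (d a : ℝ) (ha : a ≠ 0) (b c : Fin n → ℝ) :
    (∀ s₁ s₂ : ℝ,
        geo lam d b c a (s₁ + s₂) = oscMul lam (geo lam d b c a s₁) (geo lam d b c a s₂))
    ∧ geo lam d b c a 0 = oscOne n
    ∧ HasDerivAt (geo lam d b c a) ((d, fun j => (b j, c j), a) : OscG n) 0 := by
  have hl : ∀ i, lam i ≠ 0 := fun i => (hlam i).ne'
  refine ⟨?_, ?_, ?_⟩
  · intro s₁ s₂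
    simp only [geo, if_neg ha, oscMul, rot, Jpair, dot2]
    refine Prod.ext ?_ (Prod.ext (funext fun j => ?_) ?_)
    · simp only
      have key : ∀ k : Fin n,
          1 / (2 * a ^ 2) * ((b k ^ 2 + c k ^ 2) / lam k ^ 2 * Real.sin (lam k * a * (s₁ + s₂)))
          = 1 / (2 * a ^ 2) * ((b k ^ 2 + c k ^ 2) / lam k ^ 2 * Real.sin (lam k * a * s₁))
            + 1 / (2 * a ^ 2) * ((b k ^ 2 + c k ^ 2) / lam k ^ 2 * Real.sin (lam k * a * s₂))
            - 1 / 2 *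
              (1 / (a * lam k) * (b k * Real.sin (lam k * a * s₁) + c k * Real.cos (lam k * a * s₁) - c k) *
                (Real.sin (lam k * (a * s₁)) *
                    (1 / (a * lam k) * (b k * Real.sin (lam k * a * s₂) + c k * Real.cos (lam k * a * s₂) - c k)) +
                  Real.cos (lam k * (a * s₁)) *
                    (1 / (a * lam k) * (-b k * Real.cos (lam k * a * s₂) + c k * Real.sin (lam k * a * s₂) + b k))) +
              1 / (a * lam k) * (-b k * Real.cos (lam k * a * s₁) + c k * Real.sin (lam k * a * s₁) + b k) *
                -(Real.cos (lam k * (a * s₁)) *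
                      (1 / (a * lam k) * (b k * Real.sin (lam k * a * s₂) + c k * Real.cos (lam k * a * s₂) - c k)) -
                    Real.sin (lam k * (a * s₁)) *
                      (1 / (a * lam k) * (-b k * Real.cos (lam k * a * s₂) + c k * Real.sin (lam k * a * s₂) + b k)))) := by
        intro k
        have hθ : lam k * a * (s₁ + s₂) = lam k * a * s₁ + lam k * a * s₂ := by ring
        have h1 : lam k * (a * s₁) = lam k * a * s₁ := by ring
        rw [hθ, Real.sin_add, h1]
        linear_combination ((1/2) * (1/(a * lam k))^2 *
          (b k * (b k * Real.sin (lam k * a * s₂) + c k * Real.cos (lam k * a * s₂) - c k)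
            + c k * (-(b k) * Real.cos (lam k * a * s₂) + c k * Real.sin (lam k * a * s₂) + b k))) *
          Real.sin_sq_add_cos_sq (lam k * a * s₁)
      have hs : 1 / (2 * a ^ 2) * ∑ k, ((b k ^ 2 + c k ^ 2) / lam k ^ 2 * Real.sin (lam k * a * (s₁ + s₂)))
          = 1 / (2 * a ^ 2) * ∑ k, ((b k ^ 2 + c k ^ 2) / lam k ^ 2 * Real.sin (lam k * a * s₁))
            + 1 / (2 * a ^ 2) * ∑ k, ((b k ^ 2 + c k ^ 2) / lam k ^ 2 * Real.sin (lam k * a * s₂))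
            - 1 / 2 * ∑ k,
              (1 / (a * lam k) * (b k * Real.sin (lam k * a * s₁) + c k * Real.cos (lam k * a * s₁) - c k) *
                (Real.sin (lam k * (a * s₁)) *
                    (1 / (a * lam k) * (b k * Real.sin (lam k * a * s₂) + c k * Real.cos (lam k * a * s₂) - c k)) +
                  Real.cos (lam k * (a * s₁)) *
                    (1 / (a * lam k) * (-b k * Real.cos (lam k * a * s₂) + c k * Real.sin (lam k * a * s₂) + b k))) +
              1 / (a * lam k) * (-b k * Real.cos (lam k * a * s₁) + c k * Real.sin (lam k * a * s₁) + b k) *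
                -(Real.cos (lam k * (a * s₁)) *
                      (1 / (a * lam k) * (b k * Real.sin (lam k * a * s₂) + c k * Real.cos (lam k * a * s₂) - c k)) -
                    Real.sin (lam k * (a * s₁)) *
                      (1 / (a * lam k) * (-b k * Real.cos (lam k * a * s₂) + c k * Real.sin (lam k * a * s₂) + b k)))) := by
        simp only [Finset.mul_sum, ← Finset.sum_add_distrib, ← Finset.sum_sub_distrib]
        exact Finset.sum_congr rfl fun k _ => key k
      rw [hs]; ring
    · simp only [Prod.mk_add_mk, Prod.mk.injEq]
      have hθ : lam j * a * (s₁ + s₂) = lam j * a * s₁ + lam j * a * s₂ := by ring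
      have h1 : lam j * (a * s₁) = lam j * a * s₁ := by ring
      rw [hθ, Real.sin_add, Real.cos_add, h1]
      constructor <;> ring
    · ring
  · simp [geo, if_neg ha, oscOne]
  · have hgeo : geo lam d b c a = fun s : ℝ =>
        (((d + 1 / (2 * a) * ∑ k, (b k ^ 2 + c k ^ 2) / lam k) * s
          - 1 / (2 * a ^ 2) * ∑ k, (b k ^ 2 + c k ^ 2) / lam k ^ 2 * Real.sin (lam k * a * s),
         fun j : Fin n =>
          ((1/(a * lam j)) * (b j * Real.sin (lam j * a * s) + c j * Real.cos (lam j * a * s) - c j),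
           (1/(a * lam j)) * (-(b j) * Real.cos (lam j * a * s) + c j * Real.sin (lam j * a * s) + b j)),
         a * s) : OscG n) := by
      funext s
      simp only [geo, if_neg ha]
    rw [hgeo]
    have hk : ∀ k : Fin n, HasDerivAt
        (fun s : ℝ => (b k ^ 2 + c k ^ 2) / lam k ^ 2 * Real.sin (lam k * a * s))
        (a * ((b k ^ 2 + c k ^ 2) / lam k)) 0 := fun k =>
      ((((hasDerivAt_id (0:ℝ)).const_mul (lam k * a)).sin).const_mul
        ((b k ^ 2 + c k ^ 2) / lam k ^ 2)).congr_deriv (by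
          simp
          field_simp [hl k])
    have hz : HasDerivAt (fun s : ℝ =>
        (d + 1 / (2 * a) * ∑ k, (b k ^ 2 + c k ^ 2) / lam k) * s
          - 1 / (2 * a ^ 2) * ∑ k, (b k ^ 2 + c k ^ 2) / lam k ^ 2 * Real.sin (lam k * a * s)) d 0 := by
      refine (((hasDerivAt_id (0:ℝ)).const_mul
        (d + 1 / (2 * a) * ∑ k, (b k ^ 2 + c k ^ 2) / lam k)).sub
        ((HasDerivAt.fun_sum (fun k _ => hk k)).const_mul (1 / (2 * a ^ 2)))).congr_deriv ?_
      rw [← Finset.mul_sum]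
      field_simp
      ring
    have hv : HasDerivAt (fun s : ℝ => fun j : Fin n =>
        ((1/(a * lam j)) * (b j * Real.sin (lam j * a * s) + c j * Real.cos (lam j * a * s) - c j),
         (1/(a * lam j)) * (-(b j) * Real.cos (lam j * a * s) + c j * Real.sin (lam j * a * s) + b j)))
        (fun j => (b j, c j)) 0 := by
      rw [hasDerivAt_pi]
      intro j
      have hx : HasDerivAt (fun s : ℝ =>
          (1/(a * lam j)) * (b j * Real.sin (lam j * a * s) + c j * Real.cos (lam j * a * s) - c j))
          (b j) 0 := by
        refine HasDerivAt.congr_deriv (HasDerivAt.const_mul (1/(a * lam j))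
          ((((((hasDerivAt_id (0:ℝ)).const_mul (lam j * a)).sin).const_mul (b j)).add
            ((((hasDerivAt_id (0:ℝ)).const_mul (lam j * a)).cos).const_mul (c j))).sub
            (hasDerivAt_const 0 (c j)))) ?_
        simp
        field_simp [hl j]
      have hy : HasDerivAt (fun s : ℝ =>
          (1/(a * lam j)) * (-(b j) * Real.cos (lam j * a * s) + c j * Real.sin (lam j * a * s) + b j))
          (c j) 0 := by
        refine HasDerivAt.congr_deriv (HasDerivAt.const_mul (1/(a * lam j))
          ((((((hasDerivAt_id (0:ℝ)).const_mul (lam j * a)).cos).const_mul (-(b j))).add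
            ((((hasDerivAt_id (0:ℝ)).const_mul (lam j * a)).sin).const_mul (c j))).add
            (hasDerivAt_const 0 (b j)))) ?_
        simp
        field_simp [hl j]
      exact hx.prodMk hy
    have ht : HasDerivAt (fun s : ℝ => a * s) a 0 := by
      simpa using (hasDerivAt_id (0:ℝ)).const_mul a
    exact hz.prodMk (hv.prodMk ht)
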